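/- Let φ : G → G' be a half-isomorphism of groups. Then B = {a ∈ G : φ(ax) = φ(x)φ(a) for all x ∈ G} is a subgroup of G. -/

import Mathlib

theorem stmt_9 {G G' : Type*} [Group G] [Group G'] (φ : G → G')
    (hbij : Function.Bijective φ)
    (hhalf : ∀ x y : G, φ (x * y) = φ x * φ y ∨ φ (x * y) = φ y * φ x) :
    ∃ B : Subgroup G, (B : Set G) = {a : G | ∀ x : G, φ (a * x) = φ x * φ a} := by
  have h1 : φ 1 = 1 := by
    have h := hhalf 1 1
    simp only [mul_one, or_self] at h
    exact mul_eq_left.mp h.symm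
  refine ⟨⟨⟨⟨{a : G | ∀ x : G, φ (a * x) = φ x * φ a}, ?_⟩, fun x => by simp [h1]⟩, ?_⟩, rfl⟩
  · intro a b ha hb x
    have e : a * b * x = a * (b * x) := by group
    rw [e, ha, hb, ha b, mul_assoc]
  · intro a ha x
    have hinv : φ a⁻¹ = (φ a)⁻¹ := by
      have h := ha a⁻¹
      rw [mul_inv_cancel, h1] at h
      exact eq_inv_of_mul_eq_one_left h.symm
    calc φ (a⁻¹ * x) = φ (a * (a⁻¹ * x)) * (φ a)⁻¹ := by rw [ha]; group
      _ = φ x * φ a⁻¹ := by rw [hinv]; group
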